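/- For any finite matroid M and any X ⊆ E(M), α_M(X) = β_{M*}(E(M) − X), where α is defined by α(X) = η(X) − Σ_{flats F ⊊ X} α(F) with η(X) = |X| − r(X), and β is defined by β(X) = r(M) − r(X) − Σ_{Y cyclic flat, X ⊊ Y} β(Y). -/

import Mathlib

open Matroid Set

variable {α : Type*}

/-- An element that lies in every base of `M`; a coloop. -/
def MCoPaper.Coloop (M : Matroid α) (e : α) : Prop := ∀ B, M.IsBase B → e ∈ B

/-- A circuit: a minimal dependent subset of the ground set. -/
def MCoPaper.Circuit (M : Matroid α) (C : Set α) : Prop :=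
  C ⊆ M.E ∧ ¬ M.Indep C ∧ ∀ x ∈ C, M.Indep (C \ {x})

/-- A cyclic flat: a flat whose restriction has no coloops. -/
def MCoPaper.CyclicFlat (M : Matroid α) (F : Set α) : Prop :=
  M.IsFlat F ∧ ∀ e ∈ F, ¬ MCoPaper.Coloop (M ↾ F) e

/-- The rank of a set: the largest cardinality of an independent subset. -/
noncomputable def MCoPaper.rk (M : Matroid α) (X : Set α) : ℕ :=
  sSup {n | ∃ I, M.Indep I ∧ I ⊆ X ∧ I.ncard = n}


open MCoPaper Classical in
/-- Mason's β function. -/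
noncomputable def MCoPaper.beta [Fintype α] (M : Matroid α) (X : Finset α) : ℤ :=
  (rk M M.E : ℤ) - rk M ↑X -
    ∑ Y ∈ (Finset.univ.filter (fun Y : Finset α => CyclicFlat M ↑Y ∧ X ⊂ Y)).attach,
      MCoPaper.beta M Y.1
  termination_by (Fintype.card α - X.card : ℕ)
  decreasing_by
    have hY := Y.2
    simp only [Finset.mem_filter, Finset.mem_univ, true_and] at hY
    have h1 : X.card < Y.1.card := Finset.card_lt_card hY.2
    have h2 : Y.1.card ≤ Fintype.card α := Y.1.card_le_univ
    omega

open MCoPaper Classical in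
/-- Mason's α function. -/
noncomputable def MCoPaper.alpha [Fintype α] (M : Matroid α) (X : Finset α) : ℤ :=
  ((X.card : ℤ) - rk M ↑X) -
    ∑ F ∈ (Finset.univ.filter (fun F : Finset α => M.IsFlat ↑F ∧ F ⊂ X)).attach,
      MCoPaper.alpha M F.1
  termination_by X.card
  decreasing_by
    have hF := F.2
    simp only [Finset.mem_filter, Finset.mem_univ, true_and] at hF
    exact Finset.card_lt_card hF.2

/-- `A : Fin n → Set α` is a presentation of `M`. -/
def MCoPaper.IsPresentation (M : Matroid α) {n : ℕ} (A : Fin n → Set α) : Prop :=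
  (∀ i, A i ⊆ M.E) ∧
    ∀ I : Set α, M.Indep I ↔ ∃ φ : α → Fin n, Set.InjOn φ I ∧ ∀ x ∈ I, x ∈ A (φ x)

/-- `M` is a transversal matroid. -/
def MCoPaper.Transversal (M : Matroid α) : Prop :=
  ∃ (n : ℕ) (A : Fin n → Set α), MCoPaper.IsPresentation M A

/-- `B` is a fundamental basis of `M`. -/
def MCoPaper.FundBasis (M : Matroid α) (B : Set α) : Prop :=
  M.IsBase B ∧ ∀ F, MCoPaper.CyclicFlat M F → F ⊆ M.closure (B ∩ F)

/-- `M` is a fundamental transversal matroid. -/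
def MCoPaper.FundTransversal (M : Matroid α) : Prop :=
  ∃ B, MCoPaper.FundBasis M B

/- ===================== auxiliary development ===================== -/

set_option linter.unusedSectionVars false
set_option maxHeartbeats 1000000

namespace MCoPaper

section Rank

variable [Fintype α] {M : Matroid α} {I J X Y S B F Z D C : Set α} {e : α}

lemma rk_bdd (M : Matroid α) (X : Set α) :
    BddAbove {n | ∃ I, M.Indep I ∧ I ⊆ X ∧ I.ncard = n} := by
  refine ⟨Fintype.card α, ?_⟩
  rintro n ⟨I, hI, -, rfl⟩
  have := Set.ncard_le_ncard (subset_univ I) finite_univ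
  simpa [Set.ncard_univ] using this

lemma ncard_le_rk (hJ : M.Indep J) (hJX : J ⊆ X) : J.ncard ≤ rk M X :=
  le_csSup (rk_bdd M X) ⟨J, hJ, hJX, rfl⟩

lemma rk_le {n : ℕ} {X : Set α} (h : ∀ J, M.Indep J → J ⊆ X → J.ncard ≤ n) : rk M X ≤ n :=
  csSup_le ⟨0, ∅, M.empty_indep, empty_subset X, by simp⟩
    (by rintro m ⟨I, hI, hIX, rfl⟩; exact h I hI hIX)

lemma rk_eq_ncard (hJ : M.Indep J) (hJX : J ⊆ X)
    (h : ∀ J', M.Indep J' → J' ⊆ X → J'.ncard ≤ J.ncard) : rk M X = J.ncard :=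
  le_antisymm (rk_le h) (ncard_le_rk hJ hJX)

lemma basis'_max (hI : M.IsBasis' I X) (hJ : M.Indep J) (hJX : J ⊆ X) : J.ncard ≤ I.ncard := by
  by_contra hlt
  push_neg at hlt
  have henc : I.encard < J.encard := by
    rw [← Set.Finite.cast_ncard_eq I.toFinite, ← Set.Finite.cast_ncard_eq J.toFinite]
    exact_mod_cast hlt
  obtain ⟨e, he, hind⟩ := hI.indep.augment hJ henc
  have := hI.eq_of_subset_indep hind (subset_insert _ _) (insert_subset (hJX he.1) hI.subset)
  exact he.2 (by rw [this]; exact mem_insert _ _)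

lemma rk_basis' (hI : M.IsBasis' I X) : rk M X = I.ncard :=
  rk_eq_ncard hI.indep hI.subset (fun _ h h' => basis'_max hI h h')

lemma rk_basis (hI : M.IsBasis I X) : rk M X = I.ncard := rk_basis' hI.isBasis'

lemma rk_empty (M : Matroid α) [Fintype α] : rk M ∅ = 0 := by
  rw [rk_eq_ncard M.empty_indep Subset.rfl (fun J _ hJ => by simp [subset_empty_iff.1 hJ])]
  simp

lemma rk_closure_eq (M : Matroid α) [Fintype α] (X : Set α) :
    rk M (M.closure X) = rk M X := by
  obtain ⟨I, hI⟩ := M.exists_isBasis' X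
  rw [rk_basis' hI, rk_basis hI.isBasis_closure_right]

lemma rk_ground_base (hB : M.IsBase B) : rk M M.E = B.ncard := by
  refine rk_eq_ncard hB.indep hB.subset_ground (fun J hJ _ => ?_)
  obtain ⟨B', hB', hJB'⟩ := hJ.exists_isBase_superset
  rw [← hB'.ncard_eq_ncard_of_isBase hB]
  exact Set.ncard_le_ncard hJB' B'.toFinite

lemma rk_insert_of_mem_closure (he : e ∈ M.closure X) : rk M (insert e X) = rk M X := by
  rw [← rk_closure_eq M (insert e X), Matroid.closure_insert_eq_of_mem_closure he, rk_closure_eq]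

lemma rk_insert_of_not_mem_closure (heE : e ∈ M.E) (he : e ∉ M.closure X) :
    rk M (insert e X) = rk M X + 1 := by
  obtain ⟨I, hI⟩ := M.exists_isBasis' X
  have hclI : M.closure I = M.closure X := hI.closure_eq_closure
  have heI : e ∉ I := fun h => he (hclI ▸ M.subset_closure I hI.indep.subset_ground h)
  have hins : M.Indep (insert e I) :=
    (hI.indep.insert_indep_iff_of_notMem heI).2 ⟨heE, by rw [hclI]; exact he⟩
  have hrk : rk M X = I.ncard := rk_basis' hI
  rw [rk_eq_ncard hins (insert_subset_insert hI.subset) ?_, Set.ncard_insert_of_notMem heI, hrk]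
  intro J hJ hJX
  have h1 : (J \ {e}).ncard ≤ I.ncard := by
    rw [← hrk]
    exact ncard_le_rk (hJ.subset diff_subset) (by
      rintro x ⟨hx1, hx2⟩
      rcases hJX hx1 with h | h
      · exact absurd h hx2
      · exact h)
  have h2 : J.ncard ≤ (J \ {e}).ncard + 1 := by
    by_cases heJ : e ∈ J
    · rw [Set.ncard_diff_singleton_add_one heJ J.toFinite]
    · rw [Set.diff_singleton_eq_self heJ]; omega
  rw [Set.ncard_insert_of_notMem heI]
  omega

lemma rk_dual_add (hS : S ⊆ M.E) :
    rk M✶ S + rk M M.E = S.ncard + rk M (M.E \ S) := by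
  obtain ⟨I, hI⟩ := M.exists_isBasis (M.E \ S) diff_subset
  obtain ⟨B, hB, hIB⟩ := hI.exists_isBase
  have hBE : B ⊆ M.E := hB.subset_ground
  have hBsplit : (B ∩ S).ncard + I.ncard = B.ncard := by
    rw [hIB]
    rw [← Set.ncard_union_eq (Disjoint.mono inter_subset_right inter_subset_right
      disjoint_sdiff_right) (B ∩ S).toFinite (B ∩ (M.E \ S)).toFinite]
    congr 1
    rw [← Set.inter_union_distrib_left, Set.union_diff_cancel hS, Set.inter_eq_left.2 hBE]
  have hJ0 : M✶.Indep (S \ B) := by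
    rw [Matroid.dual_indep_iff_exists (diff_subset.trans hS)]
    exact ⟨B, hB, disjoint_sdiff_left⟩
  have hScount : (S \ B).ncard + (B ∩ S).ncard = S.ncard := by
    rw [← Set.ncard_union_eq (Disjoint.mono_right inter_subset_left disjoint_sdiff_left)
      (S \ B).toFinite (B ∩ S).toFinite]
    congr 1
    rw [Set.inter_comm, Set.diff_union_inter]
  have hmax : ∀ J, M✶.Indep J → J ⊆ S → J.ncard ≤ (S \ B).ncard := by
    intro J hJ hJS
    obtain ⟨hJE, B', hB', hdisj⟩ := Matroid.dual_indep_iff_exists'.1 hJ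
    have hB'E : B' ⊆ M.E := hB'.subset_ground
    have h1 : (B' ∩ (M.E \ S)).ncard ≤ I.ncard :=
      basis'_max hI.isBasis' (hB'.indep.subset inter_subset_left) inter_subset_right
    have h2 : J.ncard + (B' ∩ S).ncard ≤ S.ncard := by
      rw [← Set.ncard_union_eq (Disjoint.mono_right inter_subset_left hdisj) J.toFinite
        (B' ∩ S).toFinite]
      exact Set.ncard_le_ncard (union_subset hJS inter_subset_right) S.toFinite
    have h3 : (B' ∩ S).ncard + (B' ∩ (M.E \ S)).ncard = B'.ncard := by
      rw [← Set.ncard_union_eq (Disjoint.mono inter_subset_right inter_subset_right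
        disjoint_sdiff_right) (B' ∩ S).toFinite (B' ∩ (M.E \ S)).toFinite]
      congr 1
      rw [← Set.inter_union_distrib_left, Set.union_diff_cancel hS, Set.inter_eq_left.2 hB'E]
    have h4 : B'.ncard = B.ncard := hB'.ncard_eq_ncard_of_isBase hB
    omega
  have hrkS : rk M✶ S = (S \ B).ncard := rk_eq_ncard hJ0 diff_subset hmax
  rw [hrkS, rk_ground_base hB, rk_basis hI]
  omega

lemma mem_closure_iff_rk (he : e ∈ M.E) : e ∈ M.closure X ↔ rk M (insert e X) = rk M X := by
  constructor
  · exact rk_insert_of_mem_closure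
  · intro h
    by_contra hne
    rw [rk_insert_of_not_mem_closure he hne] at h
    omega

lemma dual_closure_compl (he : e ∈ M.E) (heX : e ∉ X) (hX : X ⊆ M.E) :
    (e ∉ M.closure X ↔ e ∈ M✶.closure ((M.E \ X) \ {e})) := by
  set Y : Set α := (M.E \ X) \ {e} with hY
  have hYE : Y ⊆ M.E := diff_subset.trans diff_subset
  have hinsY : insert e Y = M.E \ X := by
    rw [hY, Set.insert_diff_singleton,
      Set.insert_eq_self.2 (show e ∈ M.E \ X from ⟨he, heX⟩)]
  have heY : e ∉ Y := fun h => h.2 rfl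
  have hEY : M.E \ Y = insert e X := by
    ext x
    constructor
    · rintro ⟨hxE, hxY⟩
      by_cases hxe : x = e
      · exact hxe ▸ mem_insert _ _
      · by_cases hxX : x ∈ X
        · exact Set.mem_insert_of_mem _ hxX
        · exact absurd (show x ∈ Y from ⟨⟨hxE, hxX⟩, hxe⟩) hxY
    · rintro (rfl | hxX)
      · exact ⟨he, fun h => h.2 rfl⟩
      · exact ⟨hX hxX, fun h => h.1.2 hxX⟩
  have h1 : rk M✶ (insert e Y) + rk M M.E = (insert e Y).ncard + rk M X := by
    have := rk_dual_add (M := M) (S := insert e Y) (by rw [hinsY]; exact diff_subset)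
    rwa [hinsY, Set.diff_diff_cancel_left hX, ← hinsY] at this
  have h2 : rk M✶ Y + rk M M.E = Y.ncard + rk M (insert e X) := by
    have := rk_dual_add (M := M) (S := Y) hYE
    rwa [hEY] at this
  have h3 : (insert e Y).ncard = Y.ncard + 1 := Set.ncard_insert_of_notMem heY Y.toFinite
  have heE' : e ∈ M✶.E := he
  rw [mem_closure_iff_rk (M := M) he, mem_closure_iff_rk (M := M✶) heE']
  have h4 : rk M (insert e X) = rk M X ∨ rk M (insert e X) = rk M X + 1 := by
    by_cases hmem : e ∈ M.closure X
    · exact Or.inl (rk_insert_of_mem_closure hmem)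
    · exact Or.inr (rk_insert_of_not_mem_closure he hmem)
  omega

lemma flat_iff_forall (hF : F ⊆ M.E) :
    M.IsFlat F ↔ ∀ e ∈ M.E \ F, e ∉ M.closure F := by
  constructor
  · intro h e he hecl
    rw [h.closure] at hecl
    exact he.2 hecl
  · intro h
    have hcl : M.closure F = F := by
      apply Subset.antisymm
      · intro x hx
        by_contra hxF
        exact h x ⟨M.closure_subset_ground F hx, hxF⟩ hx
      · exact M.subset_closure F hF
    rw [← hcl]
    have h2 := M.subtypeClosure.isClosed_closure ⟨F ∩ M.E, inter_subset_right⟩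
    have h3 := (Matroid.isClosed_iff_isFlat (M := M)).1 h2
    rwa [← Matroid.closure_eq_subtypeClosure] at h3

lemma coloop_restrict_iff (hS : S ⊆ M.E) (he : e ∈ S) :
    MCoPaper.Coloop (M ↾ S) e ↔ e ∉ M.closure (S \ {e}) := by
  constructor
  · intro h hecl
    obtain ⟨I, hI⟩ := M.exists_isBasis (S \ {e}) (diff_subset.trans hS)
    have hScl : S ⊆ M.closure I := by
      rw [hI.closure_eq_closure]
      intro x hx
      by_cases hxe : x = e
      · rwa [hxe]
      · exact M.subset_closure (S \ {e}) (diff_subset.trans hS) ⟨hx, hxe⟩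
    have hIS : M.IsBasis I S :=
      hI.indep.isBasis_of_subset_of_subset_closure (hI.subset.trans diff_subset) hScl
    have hB : (M ↾ S).IsBase I := (Matroid.isBase_restrict_iff hS).2 hIS
    exact (hI.subset (h I hB)).2 rfl
  · intro h B hB
    have hBS : M.IsBasis B S := (Matroid.isBase_restrict_iff hS).1 hB
    by_contra heB
    have : S ⊆ M.closure (S \ {e}) :=
      hBS.subset_closure.trans (M.closure_subset_closure (subset_diff_singleton hBS.subset heB))
    exact h (this he)

lemma cyclicFlat_iff_closure :
    CyclicFlat M F ↔ M.IsFlat F ∧ ∀ e ∈ F, e ∈ M.closure (F \ {e}) := by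
  unfold CyclicFlat
  constructor
  · rintro ⟨hF, h⟩
    refine ⟨hF, fun e he => ?_⟩
    by_contra hne
    exact h e he ((coloop_restrict_iff hF.subset_ground he).2 hne)
  · rintro ⟨hF, h⟩
    refine ⟨hF, fun e he hc => ?_⟩
    exact (coloop_restrict_iff hF.subset_ground he).1 hc (h e he)

lemma flat_iff_compl_cyclic (hF : F ⊆ M.E) :
    M.IsFlat F ↔ ∀ e ∈ M.E \ F, e ∈ M✶.closure ((M.E \ F) \ {e}) := by
  rw [flat_iff_forall hF]
  exact forall₂_congr (fun e he => dual_closure_compl he.1 he.2 hF)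

lemma cyclicFlat_dual_iff (hZ : Z ⊆ M.E) :
    CyclicFlat M✶ Z ↔ CyclicFlat M (M.E \ Z) := by
  rw [cyclicFlat_iff_closure, cyclicFlat_iff_closure]
  have h1 : M✶.IsFlat Z ↔ ∀ e ∈ M.E \ Z, e ∈ M.closure ((M.E \ Z) \ {e}) := by
    have := flat_iff_compl_cyclic (M := M✶) (F := Z) (by rwa [Matroid.dual_ground])
    rwa [Matroid.dual_ground, Matroid.dual_dual] at this
  have h2 : M.IsFlat (M.E \ Z) ↔ ∀ e ∈ Z, e ∈ M✶.closure (Z \ {e}) := by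
    have := flat_iff_compl_cyclic (M := M) (F := M.E \ Z) diff_subset
    rwa [Set.diff_diff_cancel_left hZ] at this
  rw [h1, h2]
  tauto

/-- the cyclic core of a set -/
def core (M : Matroid α) (F : Set α) : Set α := {e ∈ F | e ∈ M.closure (F \ {e})}

lemma core_subset : core M F ⊆ F := sep_subset _ _

lemma notmem_core (hF : F ⊆ M.E) (he : e ∈ F) (h : e ∉ core M F) : e ∉ M.closure (F \ {e}) :=
  fun hc => h ⟨he, hc⟩

lemma indep_union_frees_aux (hF : F ⊆ M.E) (hJ : M.Indep J) (hJF : J ⊆ F) :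
    ∀ (D : Finset α), ↑D ⊆ F → (∀ d ∈ (D : Set α), d ∉ M.closure (F \ {d})) →
      Disjoint J (D : Set α) → M.Indep (J ∪ ↑D) := by
  intro D
  induction D using Finset.cons_induction with
  | empty => intro _ _ _; simpa using hJ
  | cons d D' hdD' ih =>
    intro hD hfree hdisj
    rw [Finset.coe_cons] at hD hfree hdisj ⊢
    have hD'F : (D' : Set α) ⊆ F := (subset_insert d _).trans hD
    have hdisj' : Disjoint J (D' : Set α) := hdisj.mono_right (subset_insert d _)
    have hind : M.Indep (J ∪ ↑D') :=
      ih hD'F (fun x hx => hfree x (mem_insert_of_mem d hx)) hdisj'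
    have hdJ : d ∉ J := fun h => (hdisj.ne_of_mem h (mem_insert d _)) rfl
    have hdJD' : d ∉ J ∪ (D' : Set α) := by
      rintro (h | h)
      · exact hdJ h
      · exact hdD' (by exact_mod_cast h)
    have hsub : J ∪ (D' : Set α) ⊆ F \ {d} := by
      intro x hx
      exact ⟨(union_subset hJF hD'F) hx, fun hxd => hdJD' (hxd ▸ hx)⟩
    have hdE : d ∈ M.E := hF (hD (mem_insert d _))
    have hdcl : d ∉ M.closure (J ∪ ↑D') :=
      fun hc => hfree d (mem_insert d _) (M.closure_subset_closure hsub hc)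
    have := (hind.insert_indep_iff_of_notMem hdJD').2 ⟨hdE, hdcl⟩
    rwa [← Set.union_insert] at this

lemma indep_union_frees (hF : F ⊆ M.E) (hD : D ⊆ F)
    (hfree : ∀ d ∈ D, d ∉ M.closure (F \ {d})) (hJ : M.Indep J) (hJF : J ⊆ F)
    (hdisj : Disjoint J D) : M.Indep (J ∪ D) := by
  lift D to Finset α using D.toFinite
  exact indep_union_frees_aux hF hJ hJF D hD hfree hdisj

lemma core_flat (hF : M.IsFlat F) : M.IsFlat (core M F) := by
  have hCE : core M F ⊆ M.E := core_subset.trans hF.subset_ground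
  rw [flat_iff_forall hCE]
  rintro e ⟨heE, heC⟩ hecl
  have heF : e ∈ F := by
    have : e ∈ M.closure F := M.closure_subset_closure core_subset hecl
    rwa [hF.closure] at this
  by_cases heC' : e ∈ core M F
  · exact heC heC'
  · have hsub : core M F ⊆ F \ {e} := subset_diff_singleton core_subset heC'
    exact heC ⟨heF, M.closure_subset_closure hsub hecl⟩

lemma frees_spec (hF : F ⊆ M.E) : ∀ d ∈ F \ core M F, d ∉ M.closure (F \ {d}) :=
  fun d hd => notmem_core hF hd.1 hd.2

lemma core_cyclic (hF : M.IsFlat F) : ∀ e ∈ core M F, e ∈ M.closure (core M F \ {e}) := by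
  intro e he
  set C := core M F with hC
  set D := F \ C with hD
  have hFE : F ⊆ M.E := hF.subset_ground
  obtain ⟨I, hI⟩ := M.exists_isBasis (C \ {e}) ((diff_subset.trans core_subset).trans hFE)
  have hIcl : M.closure I = M.closure (C \ {e}) := hI.closure_eq_closure
  have hIC : I ⊆ C \ {e} := hI.subset
  have heD : e ∉ D := fun h => h.2 he
  have hdisjID : Disjoint I D :=
    Set.disjoint_of_subset_left (hIC.trans diff_subset) (disjoint_sdiff_right)
  have hIunion : M.Indep (I ∪ D) :=
    indep_union_frees hFE diff_subset (frees_spec hFE) hI.indep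
      ((hIC.trans diff_subset).trans core_subset) hdisjID
  have hIDE : I ∪ D ⊆ M.E :=
    union_subset ((hIC.trans diff_subset).trans (core_subset.trans hFE)) (diff_subset.trans hFE)
  have hFcl : F \ {e} ⊆ M.closure (I ∪ D) := by
    intro x hx
    by_cases hxC : x ∈ C
    · have : x ∈ M.closure (C \ {e}) := by
        rcases eq_or_ne x e with rfl | hne
        · exact absurd rfl hx.2
        · exact M.subset_closure (C \ {e}) ((diff_subset.trans core_subset).trans hFE) ⟨hxC, hne⟩
      rw [← hIcl] at this
      exact M.closure_subset_closure subset_union_left this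
    · exact M.subset_closure (I ∪ D) hIDE (Or.inr ⟨hx.1, hxC⟩)
  have hecl2 : e ∈ M.closure (I ∪ D) := by
    have h1 : e ∈ M.closure (F \ {e}) := he.2
    have h2 : M.closure (F \ {e}) ⊆ M.closure (M.closure (I ∪ D)) :=
      M.closure_subset_closure hFcl
    rw [M.closure_closure] at h2
    exact h2 h1
  by_contra hne
  have hneI : e ∉ M.closure I := by rwa [hIcl]
  have heI : e ∉ I := fun h => hIC h |>.2 rfl
  have heE : e ∈ M.E := (core_subset.trans hFE) he
  have hinsI : M.Indep (insert e I) := (hI.indep.insert_indep_iff_of_notMem heI).2 ⟨heE, hneI⟩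
  have hinsIF : insert e I ⊆ F :=
    insert_subset (core_subset he) ((hIC.trans diff_subset).trans core_subset)
  have hdisj2 : Disjoint (insert e I) D := by
    rw [Set.disjoint_left]
    rintro x (rfl | hx)
    · exact heD
    · exact fun hxD => (hdisjID.ne_of_mem hx hxD) rfl
  have hbig : M.Indep (insert e I ∪ D) :=
    indep_union_frees hFE diff_subset (frees_spec hFE) hinsI hinsIF hdisj2
  have heID : e ∉ I ∪ D := by rintro (h | h); exacts [heI h, heD h]
  rw [Set.insert_union] at hbig
  have := (hIunion.insert_indep_iff_of_notMem heID).1 hbig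
  exact this.2 hecl2

lemma core_eta (hF : M.IsFlat F) :
    rk M F + (core M F).ncard = rk M (core M F) + F.ncard := by
  set C := core M F with hC
  set D := F \ C with hD
  have hFE : F ⊆ M.E := hF.subset_ground
  obtain ⟨I, hI⟩ := M.exists_isBasis C (core_subset.trans hFE)
  have hdisjID : Disjoint I D := Set.disjoint_of_subset_left hI.subset disjoint_sdiff_right
  have hIunion : M.Indep (I ∪ D) :=
    indep_union_frees hFE diff_subset (frees_spec hFE) hI.indep
      (hI.subset.trans core_subset) hdisjID
  have hIDF : I ∪ D ⊆ F := union_subset (hI.subset.trans core_subset) diff_subset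
  have hFcl : F ⊆ M.closure (I ∪ D) := by
    intro x hx
    by_cases hxC : x ∈ C
    · have : x ∈ M.closure C := M.subset_closure C (core_subset.trans hFE) hxC
      rw [← hI.closure_eq_closure] at this
      exact M.closure_subset_closure subset_union_left this
    · exact M.subset_closure (I ∪ D) (hIDF.trans hFE) (Or.inr ⟨hx, hxC⟩)
  have hbasisF : M.IsBasis (I ∪ D) F := hIunion.isBasis_of_subset_of_subset_closure hIDF hFcl
  have h1 : rk M F = (I ∪ D).ncard := rk_basis hbasisF
  have h2 : rk M C = I.ncard := rk_basis hI
  have h3 : (I ∪ D).ncard = I.ncard + D.ncard :=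
    Set.ncard_union_eq hdisjID I.toFinite D.toFinite
  have h4 : C.ncard + D.ncard = F.ncard := by
    rw [hD, hC]
    rw [Set.ncard_diff (core_subset) (Set.toFinite _)]
    have hle : (core M F).ncard ≤ F.ncard := Set.ncard_le_ncard core_subset F.toFinite
    omega
  omega

lemma cyclic_subset_core (hZ : CyclicFlat M Z) (hZF : Z ⊆ F) : Z ⊆ core M F := by
  intro e he
  have h := (cyclicFlat_iff_closure.1 hZ).2 e he
  refine ⟨hZF he, M.closure_subset_closure ?_ h⟩
  exact fun x hx => ⟨hZF hx.1, hx.2⟩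

lemma core_ssubset (hF : M.IsFlat F) (hnc : ¬ CyclicFlat M F) : core M F ⊂ F := by
  refine ssubset_of_ne_of_subset ?_ core_subset
  intro h
  apply hnc
  refine cyclicFlat_iff_closure.2 ⟨hF, fun e he => ?_⟩
  rw [← h] at he
  exact he.2

lemma core_cyclicFlat (hF : M.IsFlat F) : CyclicFlat M (core M F) :=
  cyclicFlat_iff_closure.2 ⟨core_flat hF, core_cyclic hF⟩

end Rank

open Classical in
theorem alpha_vanish [Fintype α] (M : Matroid α) : ∀ (n : ℕ) (F : Finset α), F.card ≤ n →
    M.IsFlat ↑F → ¬ CyclicFlat M ↑F → alpha M F = 0 := by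
  intro n
  induction n with
  | zero =>
    intro F hcard hflat hnc
    have hF0 : F = ∅ := Finset.card_eq_zero.1 (Nat.le_zero.1 hcard)
    subst hF0
    exact absurd ⟨hflat, fun e he => absurd he (by simp)⟩ hnc
  | succ n ih =>
    intro F hcard hflat hnc
    set C : Set α := core M ↑F with hCdef
    have hCfin : C.Finite := Set.toFinite C
    set Cf : Finset α := hCfin.toFinset with hCfdef
    have hCf : ↑Cf = C := hCfin.coe_toFinset
    have hCssub : C ⊂ (↑F : Set α) := core_ssubset hflat hnc
    have hCfF : Cf ⊂ F := by rw [← Finset.coe_ssubset, hCf]; exact hCssub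
    have hCfcyc : CyclicFlat M ↑Cf := by rw [hCf]; exact core_cyclicFlat hflat
    have hCfflat : M.IsFlat ↑Cf := by rw [hCf]; exact core_flat hflat
    rw [alpha, Finset.sum_attach]
    have e1 : ∑ G ∈ Finset.univ.filter (fun G : Finset α => M.IsFlat ↑G ∧ G ⊂ F), alpha M G
        = ∑ Z ∈ Finset.univ.filter (fun Z : Finset α => CyclicFlat M ↑Z ∧ Z ⊂ F), alpha M Z := by
      refine (Finset.sum_subset (Finset.monotone_filter_right _ ?_) ?_).symm
      · intro Z _ hZ
        exact ⟨hZ.1.1, hZ.2⟩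
      · intro G hG hGn
        simp only [Finset.mem_filter, Finset.mem_univ, true_and] at hG hGn
        have hGnc : ¬ CyclicFlat M ↑G := fun hc => hGn ⟨hc, hG.2⟩
        exact ih G (by have := Finset.card_lt_card hG.2; omega) hG.1 hGnc
    have e2 : Finset.univ.filter (fun Z : Finset α => CyclicFlat M ↑Z ∧ Z ⊂ F)
        = Finset.univ.filter (fun Z : Finset α => CyclicFlat M ↑Z ∧ Z ⊆ Cf) := by
      refine Finset.filter_congr (fun Z _ => ?_)
      constructor
      · rintro ⟨hc, hss⟩
        refine ⟨hc, ?_⟩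
        rw [← Finset.coe_subset, hCf]
        exact cyclic_subset_core hc (by exact_mod_cast hss.subset)
      · rintro ⟨hc, hsub⟩
        exact ⟨hc, lt_of_le_of_lt hsub hCfF⟩
    have e3 : Finset.univ.filter (fun Z : Finset α => CyclicFlat M ↑Z ∧ Z ⊆ Cf)
        = insert Cf (Finset.univ.filter (fun Z : Finset α => CyclicFlat M ↑Z ∧ Z ⊂ Cf)) := by
      ext Z
      simp only [Finset.mem_filter, Finset.mem_univ, true_and, Finset.mem_insert]
      constructor
      · rintro ⟨hc, hsub⟩
        rcases lt_or_eq_of_le (Finset.le_iff_subset.2 hsub) with h | h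
        · exact Or.inr ⟨hc, h⟩
        · exact Or.inl h
      · rintro (rfl | ⟨hc, hss⟩)
        · exact ⟨hCfcyc, Finset.Subset.refl _⟩
        · exact ⟨hc, hss.subset⟩
    have hCfnot : Cf ∉ Finset.univ.filter (fun Z : Finset α => CyclicFlat M ↑Z ∧ Z ⊂ Cf) := by
      simp only [Finset.mem_filter, Finset.mem_univ, true_and]
      exact fun h => (lt_irrefl _ h.2)
    have e4 : ∑ Z ∈ Finset.univ.filter (fun Z : Finset α => CyclicFlat M ↑Z ∧ Z ⊂ Cf), alpha M Z
        = ∑ G ∈ Finset.univ.filter (fun G : Finset α => M.IsFlat ↑G ∧ G ⊂ Cf), alpha M G := by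
      refine Finset.sum_subset (Finset.monotone_filter_right _ ?_) ?_
      · intro Z _ hZ
        exact ⟨hZ.1.1, hZ.2⟩
      · intro G hG hGn
        simp only [Finset.mem_filter, Finset.mem_univ, true_and] at hG hGn
        have hGnc : ¬ CyclicFlat M ↑G := fun hc => hGn ⟨hc, hG.2⟩
        have hlt : G.card < F.card :=
          Finset.card_lt_card (lt_of_lt_of_le hG.2 hCfF.subset)
        exact ih G (by omega) hG.1 hGnc
    have e5 : alpha M Cf = ((Cf.card : ℤ) - rk M ↑Cf) -
        ∑ G ∈ Finset.univ.filter (fun G : Finset α => M.IsFlat ↑G ∧ G ⊂ Cf), alpha M G := by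
      rw [alpha, Finset.sum_attach]
    rw [e1, e2, e3, Finset.sum_insert hCfnot, e4]
    have heta := core_eta (M := M) (F := ↑F) hflat
    rw [← hCdef] at heta
    have hc1 : C.ncard = Cf.card := by rw [← hCf, Set.ncard_coe_finset]
    have hc2 : (↑F : Set α).ncard = F.card := Set.ncard_coe_finset F
    rw [e5]
    have hrkC : rk M (↑Cf : Set α) = rk M C := by rw [hCf]
    rw [hrkC]
    omega

open Classical in
theorem main_aux [Fintype α] (M : Matroid α) (E' : Finset α) (hE' : ↑E' = M.E) :
    ∀ (n : ℕ) (X : Finset α), X.card ≤ n → ↑X ⊆ M.E → alpha M X = beta M✶ (E' \ X) := by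
  intro n
  induction n using Nat.strong_induction_on with
  | _ n ih =>
    intro X hcard hXE
    have hXE' : X ⊆ E' := by rw [← Finset.coe_subset, hE']; exact hXE
    have hcoeX' : ↑(E' \ X) = M.E \ (↑X : Set α) := by rw [Finset.coe_sdiff, hE']
    rw [alpha, Finset.sum_attach, beta, Finset.sum_attach]
    have hdg : (M✶).E = M.E := rfl
    have hA : rk M✶ M.E + rk M M.E = M.E.ncard + rk M (M.E \ M.E) := rk_dual_add Subset.rfl
    rw [Set.diff_self, rk_empty] at hA
    have hB : rk M✶ (M.E \ ↑X) + rk M M.E = (M.E \ (↑X : Set α)).ncard + rk M ↑X := by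
      have := rk_dual_add (M := M) (S := M.E \ ↑X) diff_subset
      rwa [Set.diff_diff_cancel_left hXE] at this
    have hcards : (M.E \ (↑X : Set α)).ncard + X.card = M.E.ncard := by
      rw [Set.ncard_diff hXE (Set.toFinite _), Set.ncard_coe_finset]
      have h1 : (↑X : Set α).ncard ≤ M.E.ncard := Set.ncard_le_ncard hXE (Set.toFinite _)
      rw [Set.ncard_coe_finset] at h1
      omega
    have s1 : ∑ G ∈ Finset.univ.filter (fun G : Finset α => M.IsFlat ↑G ∧ G ⊂ X), alpha M G
        = ∑ Z ∈ Finset.univ.filter (fun Z : Finset α => CyclicFlat M ↑Z ∧ Z ⊂ X), alpha M Z := by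
      refine (Finset.sum_subset (Finset.monotone_filter_right _ ?_) ?_).symm
      · intro Z _ hZ
        exact ⟨hZ.1.1, hZ.2⟩
      · intro G hG hGn
        simp only [Finset.mem_filter, Finset.mem_univ, true_and] at hG hGn
        exact alpha_vanish M G.card G le_rfl hG.1 (fun hc => hGn ⟨hc, hG.2⟩)
    have s2 : ∑ Z ∈ Finset.univ.filter (fun Z : Finset α => CyclicFlat M ↑Z ∧ Z ⊂ X), alpha M Z
        = ∑ Y ∈ Finset.univ.filter (fun Y : Finset α => CyclicFlat M✶ ↑Y ∧ (E' \ X) ⊂ Y),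
            beta M✶ Y := by
      refine Finset.sum_nbij' (fun Z => E' \ Z) (fun Y => E' \ Y) ?_ ?_ ?_ ?_ ?_
      · intro Z hZ
        simp only [Finset.mem_filter, Finset.mem_univ, true_and] at hZ ⊢
        obtain ⟨hZc, hZX⟩ := hZ
        have hZE : (↑Z : Set α) ⊆ M.E := hZc.1.subset_ground
        have hZE' : Z ⊆ E' := by rw [← Finset.coe_subset, hE']; exact hZE
        constructor
        · have hcoe : ↑(E' \ Z) = M.E \ (↑Z : Set α) := by rw [Finset.coe_sdiff, hE']
          rw [hcoe]
          rw [cyclicFlat_dual_iff diff_subset, Set.diff_diff_cancel_left hZE]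
          exact hZc
        · have hsub : E' \ X ⊆ E' \ Z :=
            Finset.sdiff_subset_sdiff (Finset.Subset.refl _) hZX.subset
          rw [Finset.ssubset_iff_of_subset hsub]
          obtain ⟨a, haX, haZ⟩ := Finset.exists_of_ssubset hZX
          exact ⟨a, Finset.mem_sdiff.2 ⟨hXE' haX, haZ⟩, fun h => (Finset.mem_sdiff.1 h).2 haX⟩
      · intro Y hY
        simp only [Finset.mem_filter, Finset.mem_univ, true_and] at hY ⊢
        obtain ⟨hYc, hYX⟩ := hY
        have hYE : (↑Y : Set α) ⊆ M.E := hYc.1.subset_ground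
        have hYE' : Y ⊆ E' := by rw [← Finset.coe_subset, hE']; exact hYE
        constructor
        · have hcoe : ↑(E' \ Y) = M.E \ (↑Y : Set α) := by rw [Finset.coe_sdiff, hE']
          rw [hcoe]
          exact (cyclicFlat_dual_iff hYE).1 hYc
        · have hsub : E' \ Y ⊆ X := by
            have := Finset.sdiff_subset_sdiff (Finset.Subset.refl E') hYX.subset
            rwa [Finset.sdiff_sdiff_eq_self hXE'] at this
          rw [Finset.ssubset_iff_of_subset hsub]
          obtain ⟨a, haY, haX'⟩ := Finset.exists_of_ssubset hYX
          have haE' : a ∈ E' := hYE' haY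
          have haX : a ∈ X := by
            by_contra h
            exact haX' (Finset.mem_sdiff.2 ⟨haE', h⟩)
          exact ⟨a, haX, fun h => (Finset.mem_sdiff.1 h).2 haY⟩
      · intro Z hZ
        simp only [Finset.mem_filter, Finset.mem_univ, true_and] at hZ
        have hZE' : Z ⊆ E' := by
          rw [← Finset.coe_subset, hE']; exact hZ.1.1.subset_ground
        exact Finset.sdiff_sdiff_eq_self hZE'
      · intro Y hY
        simp only [Finset.mem_filter, Finset.mem_univ, true_and] at hY
        have hYE' : Y ⊆ E' := by
          rw [← Finset.coe_subset, hE']; exact hY.1.1.subset_ground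
        exact Finset.sdiff_sdiff_eq_self hYE'
      · intro Z hZ
        simp only [Finset.mem_filter, Finset.mem_univ, true_and] at hZ
        have hlt : Z.card < n := lt_of_lt_of_le (Finset.card_lt_card hZ.2) hcard
        exact ih Z.card hlt Z le_rfl hZ.1.1.subset_ground
    rw [s1, s2]
    have hrkX' : rk M✶ ↑(E' \ X) = rk M✶ (M.E \ (↑X : Set α)) := by rw [hcoeX']
    rw [hdg, hrkX']
    omega

end MCoPaper

/- ===================== end auxiliary development ===================== -/

open MCoPaper

open Classical in
theorem stmt15 [Fintype α] (M : Matroid α) (X : Finset α) (hX : ↑X ⊆ M.E) :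
    alpha M X = beta M✶ (M.E.toFinset \ X) := by
  have hE : ↑(M.E.toFinset) = M.E := Set.coe_toFinset _
  exact main_aux M M.E.toFinset hE X.card X le_rfl hX
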